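/- For all real numbers m > -1 and p > -1 and every complex number k with Re(k) > -1, the integral over x from 0 to 1 of (-log x)^(k+1) * (x^m - x^p) / ((x^(m+1) + 1)(x^(p+1) + 1)) dx (where (-log x)^(k+1) is the principal-branch complex power of the positive real -log x) equals (1 - 2^(-k-1)) * ζ(k+2) * Γ(k+2) * ((m+1)^(-k-2) - (p+1)^(-k-2)). -/

import Mathlib

open MeasureTheory Set Real Complex Filter

lemma summable_f {s : ℂ} (hs : 1 < s.re) :
    Summable (fun n : ℕ ↦ 1 / ((n : ℂ) + 1) ^ s) := by
  have h1 := Complex.summable_one_div_nat_cpow.mpr hs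
  have h2 : Summable (fun n : ℕ ↦ 1 / (((n + 1 : ℕ) : ℂ)) ^ s) :=
    (summable_nat_add_iff (f := fun n : ℕ ↦ 1 / ((n : ℂ)) ^ s) 1).mpr h1
  refine h2.congr fun n ↦ ?_
  norm_num

lemma hasSum_eta {s : ℂ} (hs : 1 < s.re) :
    HasSum (fun n : ℕ ↦ (-1 : ℂ) ^ n * (1 / ((n : ℂ) + 1) ^ s))
      ((1 - 2 ^ (1 - s)) * riemannZeta s) := by
  have hsumm := summable_f hs
  have hzeta : HasSum (fun n : ℕ ↦ 1 / ((n : ℂ) + 1) ^ s) (riemannZeta s) :=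
    hsumm.hasSum_iff.mpr (zeta_eq_tsum_one_div_nat_add_one_cpow hs).symm
  have hoddeq : ∀ n : ℕ, 1 / (((2 * n + 1 : ℕ) : ℂ) + 1) ^ s
      = (2 : ℂ) ^ (-s) * (1 / ((n : ℂ) + 1) ^ s) := by
    intro n
    have h2 : ((2 * n + 1 : ℕ) : ℂ) + 1 = ((2 : ℝ) : ℂ) * (((n : ℝ) + 1 : ℝ) : ℂ) := by
      push_cast; ring
    rw [h2, mul_cpow_ofReal_nonneg (by norm_num : (0:ℝ) ≤ 2)
      (by positivity : (0:ℝ) ≤ (n : ℝ) + 1), cpow_neg]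
    push_cast
    rw [one_div, one_div, mul_inv]
  have hodd : HasSum (fun n : ℕ ↦ 1 / (((2 * n + 1 : ℕ) : ℂ) + 1) ^ s)
      ((2 : ℂ) ^ (-s) * riemannZeta s) :=
    (hzeta.mul_left ((2 : ℂ) ^ (-s))).congr_fun fun n ↦ hoddeq n
  set g : ℕ → ℂ := fun n ↦ if Odd n then 2 * (1 / ((n : ℂ) + 1) ^ s) else 0 with hg
  have hinj : Function.Injective (fun k : ℕ ↦ 2 * k + 1) := fun a b h ↦ by simp only [] at h; omega
  have hgs : HasSum g (2 * ((2 : ℂ) ^ (-s) * riemannZeta s)) := by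
    rw [← hinj.hasSum_iff (by
      intro n hn
      have : ¬ Odd n := by
        rintro ⟨j, rfl⟩; exact hn ⟨j, by simp only []⟩
      simp [g, this])]
    refine (hodd.mul_left 2).congr_fun fun n ↦ ?_
    simp [g, Function.comp, Nat.odd_iff]
  have := hzeta.sub hgs
  have h12 : (2 : ℂ) ^ (1 - s) = 2 * (2 : ℂ) ^ (-s) := by
    rw [sub_eq_add_neg, cpow_add _ _ (two_ne_zero), cpow_one]
  have hfinal : HasSum (fun n : ℕ ↦ (-1 : ℂ) ^ n * (1 / ((n : ℂ) + 1) ^ s))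
      (riemannZeta s - 2 * ((2 : ℂ) ^ (-s) * riemannZeta s)) := by
    refine this.congr_fun fun n ↦ ?_
    rcases Nat.even_or_odd n with h | h
    · have h' : ¬ Odd n := Nat.not_odd_iff_even.mpr h
      rw [h.neg_one_pow]
      simp [g, h']
    · simp [g, h, h.neg_one_pow]; ring
  convert hfinal using 1
  rw [h12]; ring
lemma integrable_exp_aux {a : ℝ} (ha : 0 < a) {s : ℂ} (hs : 0 < s.re) :
    IntegrableOn (fun t : ℝ ↦ (t : ℂ) ^ (s - 1) * rexp (-(a * t))) (Ioi 0) := by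
  have h1 := Complex.GammaIntegral_convergent hs
  rw [← mul_zero a, ← integrableOn_Ioi_comp_mul_left_iff _ _ ha] at h1
  refine IntegrableOn.congr_fun (h1.const_mul (((a : ℂ) ^ (s - 1))⁻¹))
    (fun t ht ↦ ?_) measurableSet_Ioi
  have ht' : (0 : ℝ) < t := ht
  have hane : ((a : ℂ)) ^ (s - 1) ≠ 0 := by
    simp only [Ne, cpow_eq_zero_iff, not_and_or]
    exact Or.inl (ofReal_ne_zero.mpr ha.ne')
  rw [ofReal_mul, mul_cpow_ofReal_nonneg ha.le ht'.le]
  field_simp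

lemma integrable_frac {a : ℝ} (ha : 0 < a) {s : ℂ} (hs : 0 < s.re) :
    IntegrableOn (fun t : ℝ ↦ (t : ℂ) ^ (s - 1) *
      ((rexp (-(a * t)) / (1 + rexp (-(a * t))) : ℝ) : ℂ)) (Ioi 0) := by
  refine Integrable.mono' (integrable_exp_aux ha hs).norm ?_ ?_
  · refine (ContinuousOn.mul ?_ ?_).aestronglyMeasurable measurableSet_Ioi
    · exact ContinuousOn.cpow_const continuous_ofReal.continuousOn
        (fun t ht ↦ Or.inl (by simpa using (ht : (0:ℝ) < t)))
    · have hc : Continuous fun t : ℝ ↦ rexp (-(a * t)) / (1 + rexp (-(a * t))) :=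
        Continuous.div (by continuity) (by continuity)
          (fun t ↦ by have := Real.exp_pos (-(a * t)); positivity)
      exact (Complex.continuous_ofReal.comp hc).continuousOn
  · rw [ae_restrict_iff' measurableSet_Ioi]
    filter_upwards with t ht
    rw [norm_mul, norm_mul]
    gcongr
    have h0 : (0:ℝ) < rexp (-(a * t)) := Real.exp_pos _
    simp only [Complex.norm_real, Real.norm_eq_abs]
    rw [_root_.abs_of_nonneg (le_of_lt (div_pos h0 (by linarith))), _root_.abs_of_nonneg h0.le]
    exact div_le_self h0.le (by linarith)

lemma hasSum_mellin_frac {c : ℝ} (hc : 0 < c) {s : ℂ} (hs : 1 < s.re) :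
    HasSum (fun n : ℕ ↦ Complex.Gamma s * (-1) ^ n / ((c * ((n : ℝ) + 1) : ℝ) : ℂ) ^ s)
      (mellin (fun t : ℝ ↦ ((rexp (-(c * t)) / (1 + rexp (-(c * t))) : ℝ) : ℂ)) s) := by
  refine hasSum_mellin (fun n ↦ Or.inr (by positivity)) (by linarith) (fun t ht ↦ ?_) ?_
  · have ht' : (0:ℝ) < t := ht
    set r : ℝ := rexp (-(c * t)) with hr
    have hr0 : 0 < r := Real.exp_pos _
    have hr1 : r < 1 := by
      rw [hr, Real.exp_lt_one_iff]
      nlinarith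
    have hgeo : HasSum (fun n : ℕ ↦ (-(r:ℂ)) ^ n) (1 - -(r:ℂ))⁻¹ := by
      apply hasSum_geometric_of_norm_lt_one
      rw [norm_neg, Complex.norm_real, Real.norm_eq_abs, _root_.abs_of_nonneg hr0.le]
      exact hr1
    have h2 : HasSum (fun n : ℕ ↦ (-1:ℂ)^n * ((rexp (-(c * ((n:ℝ)+1)) * t) : ℝ) : ℂ))
        ((r:ℂ) * (1 - -(r:ℂ))⁻¹) := by
      refine (hgeo.mul_left (r:ℂ)).congr_fun fun n ↦ ?_
      have hexp : rexp (-(c * ((n:ℝ)+1)) * t) = r ^ (n+1) := by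
        rw [hr, ← Real.exp_nat_mul]; congr 1; push_cast; ring
      rw [hexp]
      push_cast
      rw [neg_pow]
      ring
    have hval : (r:ℂ) * (1 - -(r:ℂ))⁻¹ = ((r / (1 + r) : ℝ) : ℂ) := by
      push_cast
      rw [sub_neg_eq_add, div_eq_mul_inv]
    exact hval ▸ h2
  · have h0 := Real.summable_one_div_nat_rpow.mpr hs
    have h1 : Summable (fun n : ℕ ↦ 1 / ((n:ℝ)+1) ^ s.re) := by
      have h2 := (summable_nat_add_iff (f := fun n : ℕ ↦ 1 / (n:ℝ) ^ s.re) 1).mpr h0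
      refine h2.congr fun n ↦ by push_cast; norm_num
    refine (h1.mul_left ((c ^ s.re)⁻¹)).congr fun n ↦ ?_
    rw [norm_pow, norm_neg, norm_one, one_pow, Real.mul_rpow hc.le (by positivity),
      one_div, one_div, mul_inv]

lemma mellin_value {c : ℝ} (hc : 0 < c) {s : ℂ} (hs : 1 < s.re) :
    mellin (fun t : ℝ ↦ ((rexp (-(c * t)) / (1 + rexp (-(c * t))) : ℝ) : ℂ)) s
      = Complex.Gamma s * (c:ℂ)^(-s) * ((1 - 2^(1-s)) * riemannZeta s) := by
  have h1 := hasSum_mellin_frac hc hs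
  have h2 := (hasSum_eta hs).mul_left (Complex.Gamma s * (c:ℂ)^(-s))
  have h3 : HasSum (fun n : ℕ ↦ Complex.Gamma s * (-1)^n / ((c * ((n:ℝ)+1) : ℝ) : ℂ)^s)
      (Complex.Gamma s * (c:ℂ)^(-s) * ((1 - 2^(1-s)) * riemannZeta s)) := by
    refine h2.congr_fun fun n ↦ ?_
    have hx : ((c * ((n:ℝ)+1) : ℝ) : ℂ) ^ s = (c:ℂ)^s * ((((n:ℝ)+1 : ℝ)):ℂ)^s := by
      rw [show ((c * ((n:ℝ)+1) : ℝ) : ℂ) = ((c:ℝ):ℂ) * ((((n:ℝ)+1 : ℝ)):ℂ) by push_cast; ring]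
      exact mul_cpow_ofReal_nonneg (a := c) (b := (n:ℝ)+1) hc.le (by positivity) s
    rw [hx, cpow_neg]
    push_cast
    rw [div_eq_mul_inv, mul_inv]
    ring
  exact h1.unique h3
lemma cov_exp_neg (g : ℝ → ℂ) :
    ∫ x in Ioo (0:ℝ) 1, g x = ∫ t in Ioi (0:ℝ), rexp (-t) • g (rexp (-t)) := by
  have himg : (fun t : ℝ ↦ rexp (-t)) '' (Ioi 0) = Ioo 0 1 := by
    ext y
    constructor
    · rintro ⟨t, ht, rfl⟩
      have ht' : (0:ℝ) < t := ht
      exact ⟨Real.exp_pos _, by rw [Real.exp_lt_one_iff]; linarith⟩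
    · rintro ⟨hy0, hy1⟩
      refine ⟨-Real.log y, ?_, by simp [Real.exp_log hy0]⟩
      simpa using Real.log_neg hy0 hy1
  have hderiv : ∀ x ∈ Ioi (0:ℝ), HasDerivWithinAt (fun t : ℝ ↦ rexp (-t))
      (-rexp (-x)) (Ioi 0) x := by
    intro x _
    have h := ((Real.hasDerivAt_exp (-x)).comp x (hasDerivAt_neg x))
    have h2 := h.hasDerivWithinAt (s := Ioi 0); rw [mul_neg_one] at h2; exact h2
  have hinj : InjOn (fun t : ℝ ↦ rexp (-t)) (Ioi 0) :=
    (Real.exp_injective.comp neg_injective).injOn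
  rw [← himg, integral_image_eq_integral_abs_deriv_smul measurableSet_Ioi hderiv hinj g]
  refine setIntegral_congr_fun measurableSet_Ioi fun t _ ↦ ?_
  rw [abs_neg, _root_.abs_of_pos (Real.exp_pos _)]

theorem integral_neg_log_cpow_mul_rpow_sub_div_add_one (m p : ℝ)
    (hm : -1 < m) (hp : -1 < p) (k : ℂ) (hk : -1 < k.re) :
    ∫ x in (0:ℝ)..1,
        ((-Real.log x : ℝ) : ℂ) ^ (k + 1) * ((x ^ m : ℝ) - (x ^ p : ℝ) : ℂ) /
          ((((x ^ (m + 1) : ℝ) : ℂ) + 1) * (((x ^ (p + 1) : ℝ) : ℂ) + 1)) =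
      (1 - (2:ℂ) ^ (-k - 1)) * riemannZeta (k + 2) * Complex.Gamma (k + 2) *
        (((m + 1 : ℝ) : ℂ) ^ (-k - 2) - ((p + 1 : ℝ) : ℂ) ^ (-k - 2)) := by
  have hs1 : 1 < (k + 2).re := by simp [Complex.add_re]; linarith
  have hs0 : 0 < (k + 2).re := by linarith
  have ham : (0:ℝ) < m + 1 := by linarith
  have hbp : (0:ℝ) < p + 1 := by linarith
  rw [intervalIntegral.integral_of_le zero_le_one,
    MeasureTheory.integral_Ioc_eq_integral_Ioo, cov_exp_neg]
  have hcongr : ∀ t ∈ Ioi (0:ℝ),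
      rexp (-t) • (((-Real.log (rexp (-t)) : ℝ) : ℂ) ^ (k + 1) *
        (((rexp (-t)) ^ m : ℝ) - ((rexp (-t)) ^ p : ℝ) : ℂ) /
        (((((rexp (-t)) ^ (m + 1) : ℝ) : ℂ) + 1) * ((((rexp (-t)) ^ (p + 1) : ℝ) : ℂ) + 1)))
      = (t : ℂ) ^ ((k + 2) - 1) *
          ((rexp (-((m+1) * t)) / (1 + rexp (-((m+1) * t))) : ℝ) : ℂ)
        - (t : ℂ) ^ ((k + 2) - 1) *
          ((rexp (-((p+1) * t)) / (1 + rexp (-((p+1) * t))) : ℝ) : ℂ) := by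
    intro t ht
    have ht' : (0:ℝ) < t := ht
    have hlog : Real.log (rexp (-t)) = -t := Real.log_exp _
    have hrpow : ∀ a : ℝ, (rexp (-t)) ^ a = rexp (-(a * t)) := fun a ↦ by
      rw [Real.rpow_def_of_pos (Real.exp_pos _), hlog]; ring_nf
    have hexp : k + 1 = (k + 2) - 1 := by ring
    rw [hlog, neg_neg, hrpow, hrpow, hrpow, hrpow, hexp]
    have hA : rexp (-((m+1) * t)) = rexp (-t) * rexp (-(m * t)) := by
      rw [← Real.exp_add]; ring_nf
    have hB : rexp (-((p+1) * t)) = rexp (-t) * rexp (-(p * t)) := by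
      rw [← Real.exp_add]; ring_nf
    rw [hA, hB, Complex.real_smul]
    set a := rexp (-t) with hadef
    set b := rexp (-(m * t)) with hbdef
    set c := rexp (-(p * t)) with hcdef
    have ha : 0 < a := Real.exp_pos _
    have hb : 0 < b := Real.exp_pos _
    have hc : 0 < c := Real.exp_pos _
    push_cast
    have hab : (a:ℂ) * (b:ℂ) + 1 ≠ 0 := by
      have h' : ((a * b + 1 : ℝ) : ℂ) ≠ 0 := ofReal_ne_zero.mpr (by positivity)
      push_cast at h'
      exact h'
    have hac : (a:ℂ) * (c:ℂ) + 1 ≠ 0 := by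
      have h' : ((a * c + 1 : ℝ) : ℂ) ≠ 0 := ofReal_ne_zero.mpr (by positivity)
      push_cast at h'
      exact h'
    have hab' : (1:ℂ) + (a:ℂ) * (b:ℂ) ≠ 0 := by rwa [add_comm] at hab
    have hac' : (1:ℂ) + (a:ℂ) * (c:ℂ) ≠ 0 := by rwa [add_comm] at hac
    field_simp
    ring
  rw [setIntegral_congr_fun measurableSet_Ioi hcongr]
  rw [integral_sub (integrable_frac ham hs0) (integrable_frac hbp hs0)]
  have hmel : ∀ c : ℝ, 0 < c →
      ∫ t in Ioi (0:ℝ), (t : ℂ) ^ ((k + 2) - 1) *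
        ((rexp (-(c * t)) / (1 + rexp (-(c * t))) : ℝ) : ℂ)
      = Complex.Gamma (k+2) * (c:ℂ)^(-(k+2)) * ((1 - 2^(1-(k+2))) * riemannZeta (k+2)) := by
    intro c hc
    rw [← mellin_value hc hs1]
    simp [mellin, smul_eq_mul]
  rw [hmel _ ham, hmel _ hbp]
  have e1 : -(k+2) = -k-2 := by ring
  have e2 : (1:ℂ)-(k+2) = -k-1 := by ring
  rw [e1, e2]
  ring
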